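/- There do not exist nonconstant polynomials f, g ∈ ℂ[X] with f^3 + g^3 = 1. -/

import Mathlib

theorem stmt_17 :
    ¬ ∃ f g : Polynomial ℂ, 0 < f.degree ∧ 0 < g.degree ∧ f ^ 3 + g ^ 3 = 1 := by
  classical
  rintro ⟨f, g, hf, hg, h⟩
  have hf0 : f ≠ 0 := fun h0 => by simp [h0] at hf
  have hg0 : g ≠ 0 := fun h0 => by simp [h0] at hg
  have hdf : 0 < f.natDegree := Polynomial.natDegree_pos_iff_degree_pos.mpr hf
  have hdg : 0 < g.natDegree := Polynomial.natDegree_pos_iff_degree_pos.mpr hg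
  have hcop : IsCoprime (f ^ 3) (g ^ 3) := ⟨1, 1, by linear_combination h⟩
  have habc := Polynomial.abc (a := f ^ 3) (b := g ^ 3) (c := -1)
    (pow_ne_zero 3 hf0) (pow_ne_zero 3 hg0) (by norm_num)
    hcop
    (by linear_combination h)
  have hrad : (UniqueFactorizationMonoid.radical (f ^ 3 * g ^ 3 * -1)).natDegree
      ≤ f.natDegree + g.natDegree := by
    have h1 : f ^ 3 * g ^ 3 * -1 = -(f ^ 3 * g ^ 3) := by ring
    rw [h1, UniqueFactorizationDomain.radical_neg,
      UniqueFactorizationMonoid.radical_mul hcop.isRelPrime,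
      UniqueFactorizationMonoid.radical_pow f (by norm_num),
      UniqueFactorizationMonoid.radical_pow g (by norm_num)]
    have hr1 : (UniqueFactorizationMonoid.radical f).natDegree ≤ f.natDegree :=
      Polynomial.natDegree_le_of_dvd (UniqueFactorizationMonoid.radical_dvd_self (a := f)) hf0
    have hr2 : (UniqueFactorizationMonoid.radical g).natDegree ≤ g.natDegree :=
      Polynomial.natDegree_le_of_dvd (UniqueFactorizationMonoid.radical_dvd_self (a := g)) hg0
    calc _ = (UniqueFactorizationMonoid.radical f).natDegree
            + (UniqueFactorizationMonoid.radical g).natDegree :=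
          Polynomial.natDegree_mul (UniqueFactorizationMonoid.radical_ne_zero (a := f))
            (UniqueFactorizationMonoid.radical_ne_zero (a := g))
      _ ≤ _ := Nat.add_le_add hr1 hr2
  rcases habc with ⟨h1, h2, -⟩ | ⟨h1, -, -⟩
  · rw [Polynomial.natDegree_pow] at h1 h2
    omega
  · have := Polynomial.natDegree_eq_zero_of_derivative_eq_zero h1
    rw [Polynomial.natDegree_pow] at this
    omega
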